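/- Let Z ~ N(m, σ²) with σ > 0, z_min ∈ ℝ, I = max(z_min − Z, 0), and EI = E[I]. Then Var(I) = EI·(z_min − m − EI) + σ²·Φ((z_min − m)/σ). -/

import Mathlib

open MeasureTheory ProbabilityTheory Real Filter Set Topology
open scoped NNReal ENNReal

noncomputable def stdNormalPdf (v : ℝ) : ℝ :=
  (Real.sqrt (2 * Real.pi))⁻¹ * Real.exp (-v ^ 2 / 2)

noncomputable def stdNormalCdf (a : ℝ) : ℝ :=
  ∫ v in Set.Iic a, stdNormalPdf v

lemma phi_eq : stdNormalPdf = gaussianPDFReal 0 1 := by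
  ext x
  simp [stdNormalPdf, gaussianPDFReal]

lemma phi_nonneg (x : ℝ) : 0 ≤ stdNormalPdf x := by
  rw [phi_eq]; exact gaussianPDFReal_nonneg 0 1 x

lemma phi_eq' (x : ℝ) : stdNormalPdf x = (Real.sqrt (2 * Real.pi))⁻¹ * Real.exp (-(1/2) * x ^ 2) := by
  rw [stdNormalPdf]; ring_nf

@[fun_prop]
lemma continuous_phi : Continuous stdNormalPdf := by
  unfold stdNormalPdf; fun_prop

lemma integrable_phi : Integrable stdNormalPdf := by
  rw [phi_eq]; exact integrable_gaussianPDFReal 0 1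

lemma integrable_mul_phi : Integrable (fun x => x * stdNormalPdf x) := by
  have h := (integrable_mul_exp_neg_mul_sq (b := 1/2) (by norm_num)).const_mul
    (Real.sqrt (2 * Real.pi))⁻¹
  refine h.congr (Eventually.of_forall fun x => ?_)
  simp only [phi_eq']; ring

lemma integrable_sq_mul_phi : Integrable (fun x => x ^ 2 * stdNormalPdf x) := by
  have h := (integrable_rpow_mul_exp_neg_mul_sq (b := 1/2) (by norm_num)
    (s := 2) (by norm_num)).const_mul (Real.sqrt (2 * Real.pi))⁻¹
  refine h.congr (Eventually.of_forall fun x => ?_)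
  simp only [phi_eq', ← Real.rpow_natCast x 2]
  push_cast
  ring

lemma hasDeriv_phi (x : ℝ) : HasDerivAt stdNormalPdf (-x * stdNormalPdf x) x := by
  have h1 : HasDerivAt (fun y : ℝ => -y ^ 2 / 2) (-x) x := by
    have := ((hasDerivAt_pow 2 x).neg.div_const 2)
    simpa using this.congr_deriv (by push_cast; ring)
  have h2 := (h1.exp.const_mul (Real.sqrt (2 * Real.pi))⁻¹)
  refine HasDerivAt.congr_deriv (h2.congr_of_eventuallyEq ?_) (by rw [stdNormalPdf]; ring)
  filter_upwards with y
  rw [stdNormalPdf]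

lemma atBot_le_cocompact_real : (atBot : Filter ℝ) ≤ cocompact ℝ := by
  rw [cocompact_eq_atBot_atTop]; exact le_sup_left

lemma tendsto_phi_atBot : Tendsto stdNormalPdf atBot (𝓝 0) := by
  have h := (tendsto_rpow_abs_mul_exp_neg_mul_sq_cocompact (a := 1/2) (by norm_num) 0).mono_left
    atBot_le_cocompact_real
  have h2 := h.const_mul (Real.sqrt (2 * Real.pi))⁻¹
  rw [mul_zero] at h2
  refine h2.congr (fun x => ?_)
  simp only [phi_eq', Real.rpow_zero]; ring

lemma tendsto_mul_phi_atBot : Tendsto (fun x => x * stdNormalPdf x) atBot (𝓝 0) := by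
  have h := (tendsto_rpow_abs_mul_exp_neg_mul_sq_cocompact (a := 1/2) (by norm_num) 1).mono_left
    atBot_le_cocompact_real
  have h2 := h.const_mul (Real.sqrt (2 * Real.pi))⁻¹
  rw [mul_zero] at h2
  refine squeeze_zero_norm (fun x => ?_) h2
  rw [Real.norm_eq_abs, abs_mul, phi_eq', Real.rpow_one, abs_mul,
    abs_of_nonneg (Real.exp_pos _).le, abs_of_nonneg (inv_nonneg.2 (Real.sqrt_nonneg _))]
  exact le_of_eq (by ring)

lemma integral_Iic_mul_phi (u : ℝ) :
    ∫ x in Iic u, x * stdNormalPdf x = -stdNormalPdf u := by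
  have h := integral_Iic_of_hasDerivAt_of_tendsto' (a := u)
    (f := fun x => -stdNormalPdf x) (f' := fun x => x * stdNormalPdf x)
    (m := 0)
    (fun x _ => ((hasDeriv_phi x).neg).congr_deriv (by ring))
    integrable_mul_phi.integrableOn
    (by simpa using tendsto_phi_atBot.neg)
  simpa using h

lemma integral_Iic_phi (u : ℝ) : ∫ x in Iic u, stdNormalPdf x = stdNormalCdf u := by rw [stdNormalCdf]

lemma integral_Iic_sq_mul_phi (u : ℝ) :
    ∫ x in Iic u, x ^ 2 * stdNormalPdf x = stdNormalCdf u - u * stdNormalPdf u := by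
  have hint : IntegrableOn (fun x : ℝ => x ^ 2 * stdNormalPdf x - stdNormalPdf x) (Iic u) :=
    (integrable_sq_mul_phi.sub integrable_phi).integrableOn
  have hderiv : ∀ x ∈ Iic u, HasDerivAt (fun x => -(x * stdNormalPdf x))
      (x ^ 2 * stdNormalPdf x - stdNormalPdf x) x := by
    intro x _
    have := ((hasDerivAt_id x).mul (hasDeriv_phi x)).neg
    exact this.congr_deriv (by simp; ring)
  have h := integral_Iic_of_hasDerivAt_of_tendsto' (a := u) (m := 0) hderiv hint
    (by simpa using tendsto_mul_phi_atBot.neg)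
  rw [integral_sub integrable_sq_mul_phi.integrableOn integrable_phi.integrableOn] at h
  rw [integral_Iic_phi] at h
  linarith [h]

lemma EA (u : ℝ) :
    ∫ x, max (u - x) 0 * stdNormalPdf x
      = u * stdNormalCdf u + stdNormalPdf u := by
  have hind : (fun x => max (u - x) 0 * stdNormalPdf x)
      = (Iic u).indicator (fun x => (u - x) * stdNormalPdf x) := by
    ext x
    by_cases hx : x ≤ u
    · rw [indicator_of_mem (by exact hx)]
      rw [max_eq_left (by linarith)]
    · rw [indicator_of_notMem (by simpa using hx)]
      rw [max_eq_right (by linarith)]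
      ring
  rw [hind, integral_indicator measurableSet_Iic]
  have : ∀ x : ℝ, (u - x) * stdNormalPdf x = u * stdNormalPdf x - x * stdNormalPdf x :=
    fun x => by ring
  simp_rw [this]
  rw [integral_sub (integrable_phi.integrableOn.const_mul u) integrable_mul_phi.integrableOn,
    integral_const_mul, integral_Iic_phi, integral_Iic_mul_phi]
  ring

lemma EB (u : ℝ) :
    ∫ x, max (u - x) 0 ^ 2 * stdNormalPdf x
      = (u ^ 2 + 1) * stdNormalCdf u + u * stdNormalPdf u := by
  have hind : (fun x => max (u - x) 0 ^ 2 * stdNormalPdf x)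
      = (Iic u).indicator (fun x => (u - x) ^ 2 * stdNormalPdf x) := by
    ext x
    by_cases hx : x ≤ u
    · rw [indicator_of_mem (by exact hx)]
      rw [max_eq_left (by linarith)]
    · rw [indicator_of_notMem (by simpa using hx)]
      rw [max_eq_right (by linarith)]
      ring
  rw [hind, integral_indicator measurableSet_Iic]
  have : ∀ x : ℝ, (u - x) ^ 2 * stdNormalPdf x
      = u ^ 2 * stdNormalPdf x - (2 * u) * (x * stdNormalPdf x) + x ^ 2 * stdNormalPdf x :=
    fun x => by ring
  simp_rw [this]
  have hf1 : IntegrableOn (fun x : ℝ => u ^ 2 * stdNormalPdf x) (Iic u) :=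
    integrable_phi.integrableOn.const_mul _
  have hf2 : IntegrableOn (fun x : ℝ => 2 * u * (x * stdNormalPdf x)) (Iic u) :=
    integrable_mul_phi.integrableOn.const_mul _
  have hf12 : IntegrableOn
      (fun x : ℝ => u ^ 2 * stdNormalPdf x - 2 * u * (x * stdNormalPdf x)) (Iic u) :=
    hf1.sub hf2
  rw [integral_add hf12 integrable_sq_mul_phi.integrableOn,
    integral_sub hf1 hf2,
    integral_const_mul, integral_const_mul, integral_Iic_phi, integral_Iic_mul_phi,
    integral_Iic_sq_mul_phi]
  ring

lemma gauss_eq_map (m σ : ℝ) (hσ : 0 < σ) :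
    gaussianReal m (Real.toNNReal (σ ^ 2))
      = Measure.map (fun x => σ * x + m) (gaussianReal 0 1) := by
  have hV : (⟨σ ^ 2, sq_nonneg σ⟩ : ℝ≥0) * 1 = Real.toNNReal (σ ^ 2) := by
    rw [mul_one]
    exact NNReal.coe_injective (by simp [Real.coe_toNNReal _ (sq_nonneg σ)]; rfl)
  have h1 : Measure.map (fun x : ℝ => σ * x) (gaussianReal 0 1)
      = gaussianReal 0 (Real.toNNReal (σ ^ 2)) := by
    rw [show (fun x : ℝ => σ * x) = (σ * ·) from rfl, gaussianReal_map_const_mul σ, mul_zero]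
    exact congrArg (gaussianReal 0) hV
  have h2 : Measure.map (· + m) (gaussianReal 0 (Real.toNNReal (σ ^ 2)))
      = gaussianReal m (Real.toNNReal (σ ^ 2)) := by
    rw [gaussianReal_map_add_const m, zero_add]
  rw [← h2, ← h1, Measure.map_map (by fun_prop) (by fun_prop)]
  rfl

lemma gaussPDF_eq : gaussianPDF 0 1 = fun x => ((gaussianPDFReal 0 1 x).toNNReal : ℝ≥0∞) := rfl

lemma gauss_integral (m σ : ℝ) (hσ : 0 < σ) {h : ℝ → ℝ} (hh : Continuous h) :
    ∫ z, h z ∂(gaussianReal m (Real.toNNReal (σ ^ 2)))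
      = ∫ x, h (σ * x + m) * stdNormalPdf x := by
  rw [gauss_eq_map m σ hσ, integral_map (by fun_prop) hh.aestronglyMeasurable,
    gaussianReal_of_var_ne_zero 0 one_ne_zero, gaussPDF_eq,
    integral_withDensity_eq_integral_smul (measurable_gaussianPDFReal 0 1).real_toNNReal]
  refine integral_congr_ae (Eventually.of_forall fun x => ?_)
  simp only [NNReal.smul_def, smul_eq_mul, ← phi_eq, Real.coe_toNNReal _ (phi_nonneg x)]
  ring

lemma gauss_integrable (m σ : ℝ) (hσ : 0 < σ) {h : ℝ → ℝ} (hh : Continuous h)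
    (hint : Integrable (fun x => h (σ * x + m) * stdNormalPdf x)) :
    Integrable h (gaussianReal m (Real.toNNReal (σ ^ 2))) := by
  rw [gauss_eq_map m σ hσ,
    integrable_map_measure hh.aestronglyMeasurable (by fun_prop),
    gaussianReal_of_var_ne_zero 0 one_ne_zero, gaussPDF_eq,
    integrable_withDensity_iff ((measurable_gaussianPDFReal 0 1).real_toNNReal.coe_nnreal_ennreal)
      (Eventually.of_forall fun x => ENNReal.coe_lt_top)]
  refine hint.congr (Eventually.of_forall fun x => ?_)
  simp only [Function.comp_apply, ENNReal.coe_toReal, ← phi_eq,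
    Real.coe_toNNReal _ (phi_nonneg x)]

lemma integrable_abs_phi : Integrable (fun x => |x| * stdNormalPdf x) := by
  refine integrable_mul_phi.abs.congr (Eventually.of_forall fun x => ?_)
  simp only [abs_mul, abs_of_nonneg (phi_nonneg x)]

lemma Ia (u : ℝ) : Integrable (fun x => max (u - x) 0 * stdNormalPdf x) := by
  refine Integrable.mono' ((integrable_phi.const_mul |u|).add integrable_abs_phi)
    (Continuous.aestronglyMeasurable (by fun_prop)) (Eventually.of_forall fun x => ?_)
  rw [Real.norm_eq_abs, abs_mul, abs_of_nonneg (phi_nonneg x), abs_of_nonneg (le_max_right _ _)]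
  have h1 : max (u - x) 0 ≤ |u| + |x| := by
    rw [max_le_iff]
    constructor
    · have := abs_sub_abs_le_abs_sub u x
      have h2 := le_abs_self (u - x)
      have := neg_abs_le x
      have := le_abs_self u
      linarith [abs_sub (u) (x)]
    · positivity
  calc max (u - x) 0 * stdNormalPdf x ≤ (|u| + |x|) * stdNormalPdf x :=
        mul_le_mul_of_nonneg_right h1 (phi_nonneg x)
    _ = |u| * stdNormalPdf x + |x| * stdNormalPdf x := by ring

lemma Ib (u : ℝ) : Integrable (fun x => max (u - x) 0 ^ 2 * stdNormalPdf x) := by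
  have hgint : Integrable (fun x => (u - x) ^ 2 * stdNormalPdf x) := by
    have h1 : Integrable (fun x : ℝ => u ^ 2 * stdNormalPdf x - 2 * u * (x * stdNormalPdf x)) :=
      (integrable_phi.const_mul (u ^ 2)).sub (integrable_mul_phi.const_mul (2 * u))
    refine (h1.add integrable_sq_mul_phi).congr (Eventually.of_forall fun x => ?_)
    simp only [Pi.add_apply]
    ring
  refine Integrable.mono' hgint
    (Continuous.aestronglyMeasurable (by fun_prop)) (Eventually.of_forall fun x => ?_)
  rw [Real.norm_eq_abs, abs_mul, abs_of_nonneg (phi_nonneg x),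
    abs_of_nonneg (pow_nonneg (le_max_right _ _) 2)]
  refine mul_le_mul_of_nonneg_right ?_ (phi_nonneg x)
  have : max (u - x) 0 ≤ |u - x| := by
    rw [max_le_iff]; exact ⟨le_abs_self _, abs_nonneg _⟩
  calc max (u - x) 0 ^ 2 ≤ |u - x| ^ 2 :=
        pow_le_pow_left₀ (le_max_right _ _) this 2
    _ = (u - x) ^ 2 := sq_abs _

theorem stmt_3 (m σ zmin : ℝ) (hσ : 0 < σ)
    (EI : ℝ)
    (hEI : EI = ∫ z, max (zmin - z) 0 ∂(gaussianReal m (Real.toNNReal (σ ^ 2)))) :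
    variance (fun z => max (zmin - z) 0) (gaussianReal m (Real.toNNReal (σ ^ 2)))
      = EI * (zmin - m - EI) + σ ^ 2 * stdNormalCdf ((zmin - m) / σ) := by
  set u : ℝ := (zmin - m) / σ with hu
  have hσ' : σ ≠ 0 := hσ.ne'
  have hz : zmin - m = σ * u := by rw [hu]; field_simp
  have hg : Continuous (fun z : ℝ => max (zmin - z) 0) := by fun_prop
  have hcomp : ∀ x : ℝ, max (zmin - (σ * x + m)) 0 = σ * max (u - x) 0 := by
    intro x
    rw [mul_max_of_nonneg _ _ hσ.le, mul_zero]
    congr 1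
    rw [mul_sub, ← hz]
    ring
  -- value of EI
  have hEIval : EI = σ * (u * stdNormalCdf u + stdNormalPdf u) := by
    rw [hEI, gauss_integral m σ hσ hg]
    calc ∫ x, max (zmin - (σ * x + m)) 0 * stdNormalPdf x
        = ∫ x, σ * (max (u - x) 0 * stdNormalPdf x) := by
          refine integral_congr_ae (Eventually.of_forall fun x => ?_)
          simp only [hcomp x]; ring
      _ = σ * (u * stdNormalCdf u + stdNormalPdf u) := by
          rw [integral_const_mul, EA u]
  -- second moment
  have hg2 : Continuous (fun z : ℝ => max (zmin - z) 0 ^ 2) := hg.pow 2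
  have hM2 : (∫ z, max (zmin - z) 0 ^ 2 ∂(gaussianReal m (Real.toNNReal (σ ^ 2))))
      = σ ^ 2 * ((u ^ 2 + 1) * stdNormalCdf u + u * stdNormalPdf u) := by
    rw [gauss_integral m σ hσ hg2]
    calc ∫ x, max (zmin - (σ * x + m)) 0 ^ 2 * stdNormalPdf x
        = ∫ x, σ ^ 2 * (max (u - x) 0 ^ 2 * stdNormalPdf x) := by
          refine integral_congr_ae (Eventually.of_forall fun x => ?_)
          simp only [hcomp x]; ring
      _ = σ ^ 2 * ((u ^ 2 + 1) * stdNormalCdf u + u * stdNormalPdf u) := by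
          rw [integral_const_mul, EB u]
  -- Memℒp
  have hint2 : Integrable (fun z => max (zmin - z) 0 ^ 2)
      (gaussianReal m (Real.toNNReal (σ ^ 2))) := by
    refine gauss_integrable m σ hσ hg2 ?_
    refine ((Ib u).const_mul (σ ^ 2)).congr (Eventually.of_forall fun x => ?_)
    simp only [hcomp x]; ring
  have hmem : MemLp (fun z : ℝ => max (zmin - z) 0) 2 (gaussianReal m (Real.toNNReal (σ ^ 2))) :=
    (memLp_two_iff_integrable_sq hg.aestronglyMeasurable).2 hint2
  rw [variance_eq_sub hmem]
  have hpow : (gaussianReal m (Real.toNNReal (σ ^ 2)))[(fun z : ℝ => max (zmin - z) 0) ^ 2]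
      = ∫ z, max (zmin - z) 0 ^ 2 ∂(gaussianReal m (Real.toNNReal (σ ^ 2))) := by
    refine integral_congr_ae (Eventually.of_forall fun z => ?_)
    simp [Pi.pow_apply]
  rw [hpow, hM2, ← hEI, hEIval, hz]
  ring
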